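/- arXiv:1303.3017 — 2 statements merged into one kernel-verified Lean document; each statement's English description precedes it below -/
import Mathlib

section
/- If W is a non-backtracking walk from a directed edge e to its reversal -e, then the signed weight satisfies w(W) = -w(-W), where -W is the reversed walk; if W is a non-backtracking walk from e back to e, then w(W) = w(-W). -/
open Complex

noncomputable section

attribute [local instance] Classical.propDecidable

/-- Reversal of a directed edge `(z, w) ↦ (w, z)`. -/
def rev (e : ℂ × ℂ) : ℂ × ℂ := (e.2, e.1)

/-- The undirected edge underlying a directed edge. -/
def ue (e : ℂ × ℂ) : Sym2 ℂ := s(e.1, e.2)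

/-- The turning angle `∠(e, g) = Arg((h(g) - t(g)) / (h(e) - t(e))) ∈ (-π, π]`. -/
def ang (e g : ℂ × ℂ) : ℝ := Complex.arg ((g.2 - g.1) / (e.2 - e.1))

/-- The list of consecutive steps of a walk, recorded as a list of pairs of directed edges. -/
def steps (l : List (ℂ × ℂ)) : List ((ℂ × ℂ) × (ℂ × ℂ)) := l.zip l.tail

/-- The total turning angle `α(W)` of a walk. -/
def totalAngle (l : List (ℂ × ℂ)) : ℝ := ((steps l).map fun p => ang p.1 p.2).sum

/-- The signed weight `w(W) = exp(i α(W)/2) ∏_{i<n} x_{e_i}` of a walk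
(the last edge is not counted in the product of edge weights). -/
def wt (x : Sym2 ℂ → ℝ) (l : List (ℂ × ℂ)) : ℂ :=
  Complex.exp (Complex.I * (totalAngle l : ℂ) / 2) *
    ((l.dropLast).map fun e => (x (ue e) : ℂ)).prod

/-- A non-backtracking walk in the directed edge set `D`: a nonempty sequence of directed
edges of `D` such that consecutive edges are head-to-tail and never exact reversals. -/
def IsWalk (D : Set (ℂ × ℂ)) (l : List (ℂ × ℂ)) : Prop :=
  l ≠ [] ∧ (∀ e ∈ l, e ∈ D) ∧ List.Chain' (fun a b => a.2 = b.1 ∧ b ≠ rev a) l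

/-- A non-backtracking walk from the directed edge `e` to the directed edge `g`. -/
def WalkFrom (D : Set (ℂ × ℂ)) (e g : ℂ × ℂ) (l : List (ℂ × ℂ)) : Prop :=
  IsWalk D l ∧ l.head? = some e ∧ l.getLast? = some g

/-- The reversed walk `-W`. -/
def revWalk (l : List (ℂ × ℂ)) : List (ℂ × ℂ) := (l.map rev).reverse

/-- The Kac-Ward transition coefficient
`Λ_{e,g} = x_e exp(i ∠(e,g)/2)` if `h(e) = t(g)` and `g ≠ -e`, and `0` otherwise. -/
def KWtrans (D : Set (ℂ × ℂ)) (x : Sym2 ℂ → ℝ) (e g : ℂ × ℂ) : ℂ :=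
  if e ∈ D ∧ g ∈ D ∧ e.2 = g.1 ∧ g ≠ rev e then
    (x (ue e) : ℂ) * Complex.exp (Complex.I * (ang e g : ℂ) / 2)
  else 0

/-- Number of times a walk goes through a given undirected edge
(the final edge of a walk is not counted as "gone through"). -/
def throughCount (l : List (ℂ × ℂ)) (t : Sym2 ℂ) : ℕ :=
  ((l.dropLast).filter fun a => ue a = t).length

/-- A graph embedded in the plane, presented by its (symmetric) set of directed edges.
Edges are nondegenerate segments, and, since two edges of a graph overlap in at most one
point, an edge is never continued by an edge turning by exactly the angle `π`
(i.e. the direction ratio of consecutive distinct edges is never a nonpositive real). -/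
structure PlaneGraph where
  D : Set (ℂ × ℂ)
  nd : ∀ e ∈ D, e.1 ≠ e.2
  symm : ∀ e ∈ D, rev e ∈ D
  noHalfTurn : ∀ e ∈ D, ∀ g ∈ D, e.2 = g.1 → g ≠ rev e →
    ¬(((g.2 - g.1) / (e.2 - e.1)).im = 0 ∧ ((g.2 - g.1) / (e.2 - e.1)).re < 0)


namespace KWaux

def dir (e : ℂ × ℂ) : ℂ := e.2 - e.1
def u (e : ℂ × ℂ) : ℂ := dir e / ‖dir e‖

lemma ue_rev (e : ℂ × ℂ) : ue (rev e) = ue e := by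
  simp [ue, rev, Sym2.eq_swap]

lemma dir_ne_zero {e : ℂ × ℂ} (h : e.1 ≠ e.2) : dir e ≠ 0 :=
  sub_ne_zero.mpr (Ne.symm h)

lemma u_ne_zero {e : ℂ × ℂ} (h : e.1 ≠ e.2) : u e ≠ 0 := by
  have h1 := dir_ne_zero h
  simp [u, h1]

lemma u_rev (e : ℂ × ℂ) : u (rev e) = - u e := by
  have : dir (rev e) = - dir e := by simp [dir, rev]
  simp [u, this, neg_div]

lemma totalAngle_singleton (a : ℂ × ℂ) : totalAngle [a] = 0 := by
  simp [totalAngle, steps]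

lemma totalAngle_cons_cons (a b : ℂ × ℂ) (t : List (ℂ × ℂ)) :
    totalAngle (a :: b :: t) = ang a b + totalAngle (b :: t) := by
  simp [totalAngle, steps]

lemma totalAngle_append : ∀ (m : List (ℂ × ℂ)) (c d : ℂ × ℂ),
    m.getLast? = some d → totalAngle (m ++ [c]) = totalAngle m + ang d c
  | [], c, d, h => by simp at h
  | [a], c, d, h => by
      simp at h
      subst h
      simp [totalAngle_cons_cons, totalAngle_singleton]
  | a :: b :: t, c, d, h => by
      have h' : (b :: t).getLast? = some d := by
        rwa [List.getLast?_cons_cons] at h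
      have ih := totalAngle_append (b :: t) c d h'
      simp only [List.cons_append] at ih ⊢
      rw [totalAngle_cons_cons, totalAngle_cons_cons, ih]
      ring

lemma revWalk_cons (a : ℂ × ℂ) (t : List (ℂ × ℂ)) :
    revWalk (a :: t) = revWalk t ++ [rev a] := by
  simp [revWalk]

lemma getLast?_revWalk (a : ℂ × ℂ) (t : List (ℂ × ℂ)) :
    (revWalk (a :: t)).getLast? = some (rev a) := by
  simp [revWalk]

lemma totalAngle_revWalk : ∀ (t : List (ℂ × ℂ)) (a : ℂ × ℂ),
    List.Chain' (fun p q => ang (rev q) (rev p) = - ang p q) (a :: t) →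
    totalAngle (revWalk (a :: t)) = - totalAngle (a :: t)
  | [], a, _ => by simp [revWalk, totalAngle_singleton]
  | b :: t, a, h => by
      rw [List.Chain', List.isChain_cons_cons] at h
      have ih := totalAngle_revWalk t b h.2
      rw [revWalk_cons, totalAngle_append _ _ _ (getLast?_revWalk b t), ih,
        totalAngle_cons_cons, h.1]
      ring

lemma exp_ang (a b : ℂ × ℂ) (ha : a.1 ≠ a.2) (hb : b.1 ≠ b.2) :
    Complex.exp (I * (ang a b : ℂ)) = u b / u a := by
  have hda := dir_ne_zero ha
  have hdb := dir_ne_zero hb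
  have hz : dir b / dir a ≠ 0 := div_ne_zero hdb hda
  have key := Complex.norm_mul_exp_arg_mul_I (dir b / dir a)
  have : Complex.exp ((ang a b : ℂ) * I) = (dir b / dir a) / ‖dir b / dir a‖ := by
    rw [eq_div_iff (by exact_mod_cast (norm_ne_zero_iff.mpr hz))]
    rw [mul_comm]
    exact key
  rw [mul_comm, this, u, u, norm_div]
  have h1 : (‖dir a‖ : ℂ) ≠ 0 := by exact_mod_cast norm_ne_zero_iff.mpr hda
  have h2 : (‖dir b‖ : ℂ) ≠ 0 := by exact_mod_cast norm_ne_zero_iff.mpr hdb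
  push_cast
  field_simp

lemma exp_totalAngle : ∀ (t : List (ℂ × ℂ)) (a g : ℂ × ℂ),
    (a :: t).getLast? = some g → (∀ f ∈ a :: t, f.1 ≠ f.2) →
    Complex.exp (I * (totalAngle (a :: t) : ℂ)) = u g / u a
  | [], a, g, hg, hnd => by
      simp at hg
      subst hg
      rw [totalAngle_singleton]
      simp [div_self (u_ne_zero (hnd a (by simp)))]
  | b :: t, a, g, hg, hnd => by
      have hg' : (b :: t).getLast? = some g := by rwa [List.getLast?_cons_cons] at hg
      have ih := exp_totalAngle t b g hg' (fun f hf => hnd f (List.mem_cons_of_mem _ hf))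
      have ha := hnd a (by simp)
      have hb := hnd b (by simp)
      rw [totalAngle_cons_cons]
      push_cast
      rw [mul_add, Complex.exp_add, exp_ang a b ha hb, ih]
      have h1 := u_ne_zero ha
      have h2 := u_ne_zero hb
      field_simp

lemma ang_rev_eq (Γ : PlaneGraph) {a b : ℂ × ℂ} (ha : a ∈ Γ.D) (hb : b ∈ Γ.D)
    (hab : a.2 = b.1) (hnb : b ≠ rev a) : ang (rev b) (rev a) = - ang a b := by
  have hda : a.2 - a.1 ≠ 0 := sub_ne_zero.mpr (Ne.symm (Γ.nd a ha))
  have hdb : b.2 - b.1 ≠ 0 := sub_ne_zero.mpr (Ne.symm (Γ.nd b hb))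
  set z : ℂ := (b.2 - b.1) / (a.2 - a.1) with hz
  have hz0 : z ≠ 0 := div_ne_zero hdb hda
  have hpi : Complex.arg z ≠ Real.pi := by
    intro h
    rw [Complex.arg_eq_pi_iff] at h
    exact Γ.noHalfTurn a ha b hb hab hnb ⟨h.2, h.1⟩
  have h1 : ang (rev b) (rev a) = Complex.arg z⁻¹ := by
    unfold ang
    simp only [rev]
    rw [hz, inv_div]
    congr 1
    rw [show a.1 - a.2 = -(a.2 - a.1) by ring, show b.1 - b.2 = -(b.2 - b.1) by ring,
      neg_div_neg_eq]
  rw [h1, Complex.arg_inv, if_neg hpi]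
  rfl

lemma chain'_mem {α : Type*} {Q : α → α → Prop} {P : α → Prop} :
    ∀ {l : List α}, List.Chain' Q l → (∀ e ∈ l, P e) →
      List.Chain' (fun x y => P x ∧ P y ∧ Q x y) l := by
  intro l
  induction l with
  | nil => intro _ _; exact List.isChain_nil
  | cons a t ih =>
    cases t with
    | nil => intro _ _; exact List.isChain_singleton _
    | cons b t' =>
      intro h hm
      rw [List.Chain', List.isChain_cons_cons] at h ⊢
      exact ⟨⟨hm a (by simp), hm b (by simp), h.1⟩,
        ih h.2 (fun e he => hm e (List.mem_cons_of_mem _ he))⟩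

lemma dropLast_revWalk (a : ℂ × ℂ) (t : List (ℂ × ℂ)) :
    (revWalk (a :: t)).dropLast = (t.map rev).reverse := by
  simp [revWalk]

lemma key (Γ : PlaneGraph) (x : Sym2 ℂ → ℝ) (hx : ∀ t : Sym2 ℂ, 0 < x t)
    (e g : ℂ × ℂ) (hue : ue g = ue e) (l : List (ℂ × ℂ)) (hW : WalkFrom Γ.D e g l) :
    wt x l = Complex.exp (Complex.I * (totalAngle l : ℂ)) * wt x (revWalk l) ∧
    Complex.exp (Complex.I * (totalAngle l : ℂ)) = u g / u e := by
  obtain ⟨⟨hne, hmem, hch⟩, hhead, hlast⟩ := hW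
  obtain ⟨t, rfl⟩ : ∃ t, l = e :: t := by
    cases l with
    | nil => simp at hhead
    | cons a t =>
      simp only [List.head?_cons, Option.some.injEq] at hhead
      exact ⟨t, by rw [hhead]⟩
  have hnd : ∀ f ∈ e :: t, f.1 ≠ f.2 := fun f hf => Γ.nd f (hmem f hf)
  -- the chain of angle negations
  have hchain : List.Chain' (fun p q => ang (rev q) (rev p) = - ang p q) (e :: t) := by
    refine (chain'_mem hch hmem).imp ?_
    rintro a b ⟨haD, hbD, hab, hnb⟩
    exact ang_rev_eq Γ haD hbD hab hnb
  have hα := totalAngle_revWalk t e hchain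
  have hexp := exp_totalAngle t e g hlast hnd
  -- product equality
  set f : ℂ × ℂ → ℂ := fun a => ((x (ue a) : ℝ) : ℂ) with hf
  have hfe : f e ≠ 0 := by
    simp only [hf]
    exact_mod_cast ne_of_gt (hx (ue e))
  have hfg : f g = f e := by simp only [hf, hue]
  have hP' : (((revWalk (e :: t)).dropLast).map f).prod = (t.map f).prod := by
    rw [dropLast_revWalk]
    rw [List.map_reverse, List.prod_reverse, List.map_map]
    congr 1
    apply List.map_congr_left
    intro a _
    simp only [Function.comp, hf, ue_rev]
  have hsplit : ((e :: t).dropLast).map f ++ [f g] = f e :: t.map f := by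
    have h0 : (e :: t).dropLast ++ [g] = e :: t :=
      List.dropLast_append_getLast? g (by simp [hlast])
    have := congrArg (List.map f) h0
    simpa using this
  have hP : (((e :: t).dropLast).map f).prod = (t.map f).prod := by
    have h1 := congrArg List.prod hsplit
    simp only [List.prod_append, List.prod_cons, List.prod_singleton, List.prod_nil, mul_one, hfg] at h1
    exact mul_right_cancel₀ hfe (by rw [h1, mul_comm])
  constructor
  · show wt x (e :: t) = _
    unfold wt
    rw [hα, hP', hP]
    have harg : Complex.I * ((totalAngle (e :: t) : ℝ) : ℂ) / 2 =
        Complex.I * ((totalAngle (e :: t) : ℝ) : ℂ) +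
          Complex.I * (((-(totalAngle (e :: t)) : ℝ)) : ℂ) / 2 := by
      push_cast
      ring
    rw [harg, Complex.exp_add, mul_assoc]
  · exact hexp

end KWaux

/-- for a walk from `e` to `-e` one has `w(W) = -w(-W)`, and for a walk
from `e` back to `e` one has `w(W) = w(-W)`. -/
theorem weight_of_reversed_walk
    (Γ : PlaneGraph) (x : Sym2 ℂ → ℝ) (hx : ∀ t : Sym2 ℂ, 0 < x t)
    (e : ℂ × ℂ) (l : List (ℂ × ℂ)) :
    (WalkFrom Γ.D e (rev e) l → wt x l = - wt x (revWalk l)) ∧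
    (WalkFrom Γ.D e e l → wt x l = wt x (revWalk l)) := by
  constructor
  · intro hW
    have he : e ∈ Γ.D := by
      obtain ⟨⟨hne, hmem, _⟩, hhead, _⟩ := hW
      exact hmem e (List.mem_of_mem_head? hhead)
    have hnd := Γ.nd e he
    obtain ⟨h1, h2⟩ := KWaux.key Γ x hx e (rev e) (KWaux.ue_rev e) l hW
    rw [KWaux.u_rev, neg_div, div_self (KWaux.u_ne_zero hnd)] at h2
    rw [h1, h2]
    ring
  · intro hW
    have he : e ∈ Γ.D := by
      obtain ⟨⟨hne, hmem, _⟩, hhead, _⟩ := hW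
      exact hmem e (List.mem_of_mem_head? hhead)
    have hnd := Γ.nd e he
    obtain ⟨h1, h2⟩ := KWaux.key Γ x hx e e rfl l hW
    rw [div_self (KWaux.u_ne_zero hnd)] at h2
    rw [h1, h2, one_mul]
end
end

section
/- For any directed edge e of a planar graph, the sum of the signed weights over all non-backtracking walks from e to -e equals zero: ∑_{W ∈ W(e,-e)} w(W) = 0. (Assume edge weights small enough that the series converges absolutely, e.g. ‖x‖_∞ < 1/(Δ-1) where Δ is the maximum degree.) -/
open Complex

noncomputable section

attribute [local instance] Classical.propDecidable

-- auxiliary lemmas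

@[simp] lemma rev_rev (e : ℂ × ℂ) : rev (rev e) = e := rfl
@[simp] lemma ue_rev (e : ℂ × ℂ) : ue (rev e) = ue e := Sym2.eq_swap

lemma revWalk_revWalk (l : List (ℂ × ℂ)) : revWalk (revWalk l) = l := by
  simp [revWalk, List.map_reverse, List.map_map, Function.comp_def]

lemma steps_cons_cons (a b : ℂ × ℂ) (l : List (ℂ × ℂ)) :
    steps (a :: b :: l) = (a, b) :: steps (b :: l) := rfl

lemma steps_append_singleton (l : List (ℂ × ℂ)) (hl : l ≠ []) (y : ℂ × ℂ) :
    steps (l ++ [y]) = steps l ++ [(l.getLast hl, y)] := by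
  induction l with
  | nil => simp at hl
  | cons a l ih =>
    cases l with
    | nil => simp [steps]
    | cons b l =>
      rw [List.cons_append, List.cons_append, steps_cons_cons, ← List.cons_append,
        ih (by simp)]
      simp [steps_cons_cons, List.getLast_cons]

lemma steps_revWalk (l : List (ℂ × ℂ)) :
    steps (revWalk l) = ((steps l).map (fun p => (rev p.2, rev p.1))).reverse := by
  induction l with
  | nil => rfl
  | cons a l ih =>
    cases l with
    | nil => rfl
    | cons b l =>
      have h1 : revWalk (a :: b :: l) = revWalk (b :: l) ++ [rev a] := by
        simp [revWalk]
      have hne : revWalk (b :: l) ≠ [] := by simp [revWalk]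
      have hlast : (revWalk (b :: l)).getLast hne = rev b := by
        have : (revWalk (b :: l)).getLast? = some (rev b) := by
          simp [revWalk, List.getLast?_reverse]
        rw [List.getLast?_eq_getLast hne] at this
        exact Option.some_injective _ this
      rw [h1, steps_append_singleton _ hne, hlast, ih, steps_cons_cons]
      simp

lemma mem_steps_of_chain' {R : (ℂ × ℂ) → (ℂ × ℂ) → Prop} {l : List (ℂ × ℂ)}
    (h : List.Chain' R l) {p : (ℂ × ℂ) × (ℂ × ℂ)} (hp : p ∈ steps l) : R p.1 p.2 := by
  induction l with
  | nil => simp [steps] at hp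
  | cons a l ih =>
    cases l with
    | nil => simp [steps] at hp
    | cons b l =>
      rw [steps_cons_cons] at hp
      rcases List.mem_cons.1 hp with h1 | h1
      · subst h1; exact (List.isChain_cons_cons.1 h).1
      · exact ih (List.isChain_cons_cons.1 h).2 h1

lemma exp_totalAngle (l : List (ℂ × ℂ)) (a : ℂ × ℂ)
    (h : ∀ p ∈ a :: l, p.2 - p.1 ≠ 0) :
    Complex.exp (Complex.I * (totalAngle (a :: l) : ℂ)) *
      ((norm ((((a :: l).getLast (by simp)).2 - ((a :: l).getLast (by simp)).1)
        / (a.2 - a.1))) : ℂ)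
      = (((a :: l).getLast (by simp)).2 - ((a :: l).getLast (by simp)).1) / (a.2 - a.1) := by
  induction l generalizing a with
  | nil =>
    have ha : a.2 - a.1 ≠ 0 := h a (by simp)
    simp [totalAngle, steps, div_self ha]
  | cons b l ih =>
    have ha : a.2 - a.1 ≠ 0 := h a (by simp)
    have hb : b.2 - b.1 ≠ 0 := h b (by simp)
    have hIH := ih b (fun p hp => h p (List.mem_cons_of_mem a hp))
    set L := ((b :: l).getLast (by simp)) with hL
    have hlast : ((a :: b :: l).getLast (by simp)) = L := by
      rw [List.getLast_cons (by simp)]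
    rw [hlast]
    have hta : totalAngle (a :: b :: l) = ang a b + totalAngle (b :: l) := by
      simp [totalAngle, steps_cons_cons]
    have hsplit : Complex.I * ((totalAngle (a :: b :: l) : ℝ) : ℂ)
        = ((ang a b : ℝ) : ℂ) * Complex.I + Complex.I * ((totalAngle (b :: l) : ℝ) : ℂ) := by
      rw [hta]; push_cast; ring
    rw [hsplit, Complex.exp_add]
    have habs : (L.2 - L.1) / (a.2 - a.1) = ((b.2 - b.1) / (a.2 - a.1)) * ((L.2 - L.1) / (b.2 - b.1)) := by
      field_simp
    have habs2 : ((norm ((L.2 - L.1) / (a.2 - a.1))) : ℂ)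
        = ((norm ((b.2 - b.1) / (a.2 - a.1))) : ℂ) * ((norm ((L.2 - L.1) / (b.2 - b.1))) : ℂ) := by
      rw [habs, norm_mul, Complex.ofReal_mul]
    have h1 : ((norm ((b.2 - b.1) / (a.2 - a.1))) : ℂ) *
        Complex.exp (((ang a b : ℝ) : ℂ) * Complex.I) = (b.2 - b.1) / (a.2 - a.1) :=
      Complex.norm_mul_exp_arg_mul_I _
    rw [habs2, habs]
    calc Complex.exp (((ang a b : ℝ) : ℂ) * Complex.I) *
          Complex.exp (Complex.I * ((totalAngle (b :: l) : ℝ) : ℂ)) *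
          (((norm ((b.2 - b.1) / (a.2 - a.1))) : ℂ) * ((norm ((L.2 - L.1) / (b.2 - b.1))) : ℂ))
        = (((norm ((b.2 - b.1) / (a.2 - a.1))) : ℂ) * Complex.exp (((ang a b : ℝ) : ℂ) * Complex.I)) *
          (Complex.exp (Complex.I * ((totalAngle (b :: l) : ℝ) : ℂ)) * ((norm ((L.2 - L.1) / (b.2 - b.1))) : ℂ)) := by ring
      _ = ((b.2 - b.1) / (a.2 - a.1)) * ((L.2 - L.1) / (b.2 - b.1)) := by rw [h1, hIH]

lemma ang_rev (a b : ℂ × ℂ)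
    (hne : ¬(((b.2 - b.1) / (a.2 - a.1)).im = 0 ∧ ((b.2 - b.1) / (a.2 - a.1)).re < 0)) :
    ang (rev b) (rev a) = - ang a b := by
  have h1 : ((rev a).2 - (rev a).1) / ((rev b).2 - (rev b).1)
      = ((b.2 - b.1) / (a.2 - a.1))⁻¹ := by
    rw [inv_div]
    show (a.1 - a.2) / (b.1 - b.2) = _
    rw [show a.1 - a.2 = -(a.2 - a.1) by ring, show b.1 - b.2 = -(b.2 - b.1) by ring,
      neg_div_neg_eq]
  unfold ang
  rw [h1, Complex.arg_inv, if_neg]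
  intro hpi
  obtain ⟨h2, h3⟩ := Complex.arg_eq_pi_iff.1 hpi
  exact hne ⟨h3, h2⟩

lemma totalAngle_revWalk (l : List (ℂ × ℂ))
    (h : ∀ p ∈ steps l, ang (rev p.2) (rev p.1) = - ang p.1 p.2) :
    totalAngle (revWalk l) = - totalAngle l := by
  unfold totalAngle
  rw [steps_revWalk, List.map_reverse, List.sum_reverse, List.map_map]
  have : ((steps l).map ((fun p : (ℂ × ℂ) × (ℂ × ℂ) => ang p.1 p.2) ∘
      fun p => (rev p.2, rev p.1))) = (steps l).map (fun p => - ang p.1 p.2) :=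
    List.map_congr_left (fun p hp => h p hp)
  rw [this]
  induction steps l with
  | nil => simp
  | cons a t ih => simp_all; ring

lemma mem_of_mem_steps {l : List (ℂ × ℂ)} {p : (ℂ × ℂ) × (ℂ × ℂ)} (hp : p ∈ steps l) :
    p.1 ∈ l ∧ p.2 ∈ l :=
  ⟨(List.of_mem_zip hp).1, List.tail_subset l (List.of_mem_zip hp).2⟩

lemma revWalk_walkFrom (Γ : PlaneGraph) (e : ℂ × ℂ) {l : List (ℂ × ℂ)}
    (hl : WalkFrom Γ.D e (rev e) l) : WalkFrom Γ.D e (rev e) (revWalk l) := by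
  obtain ⟨⟨hne, hmem, hch⟩, hhd, hlast⟩ := hl
  refine ⟨⟨by simpa [revWalk] using hne, ?_, ?_⟩, ?_, ?_⟩
  · intro p hp
    simp only [revWalk, List.mem_reverse, List.mem_map] at hp
    obtain ⟨q, hq, rfl⟩ := hp
    exact Γ.symm q (hmem q hq)
  · unfold List.Chain' at hch ⊢
    rw [revWalk, List.isChain_reverse, List.isChain_map]
    exact hch.imp (fun a b hab => ⟨hab.1.symm, fun hc => hab.2 (rev_rev b ▸ hc).symm⟩)
  · rw [revWalk, List.head?_reverse, List.getLast?_map, hlast]; rfl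
  · rw [revWalk, List.getLast?_reverse, List.head?_map, hhd]; rfl

lemma wt_revWalk (Γ : PlaneGraph) (x : Sym2 ℂ → ℝ) (hx : ∀ t : Sym2 ℂ, 0 < x t)
    (e : ℂ × ℂ) {l : List (ℂ × ℂ)} (hl : WalkFrom Γ.D e (rev e) l) :
    wt x (revWalk l) = - wt x l := by
  obtain ⟨⟨hne, hmem, hch⟩, hhd, hlast⟩ := hl
  obtain ⟨a, t, rfl⟩ := List.exists_cons_of_ne_nil hne
  have ha : a = e := by simpa using hhd
  subst ha
  have hd : ∀ p ∈ a :: t, p.2 - p.1 ≠ 0 :=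
    fun p hp => sub_ne_zero.2 (Γ.nd p (hmem p hp)).symm
  have he : a.2 - a.1 ≠ 0 := hd a (by simp)
  have hL : (a :: t).getLast (by simp) = rev a := by
    have := List.getLast?_eq_getLast (l := a :: t) (by simp)
    rw [hlast] at this
    exact (Option.some_injective _ this).symm
  -- exp of total angle is -1
  have hexp : Complex.exp (Complex.I * ((totalAngle (a :: t) : ℝ) : ℂ)) = -1 := by
    have h0 := exp_totalAngle t a hd
    rw [hL] at h0
    have hr : ((rev a).2 - (rev a).1) / (a.2 - a.1) = -1 := by
      show (a.1 - a.2) / (a.2 - a.1) = -1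
      rw [show a.1 - a.2 = -(a.2 - a.1) by ring, neg_div, div_self he]
    rw [hr] at h0
    simpa using h0
  -- total angle of reversed walk
  have hangle : totalAngle (revWalk (a :: t)) = - totalAngle (a :: t) := by
    apply totalAngle_revWalk
    intro p hp
    have hs := mem_steps_of_chain' hch hp
    have hm := mem_of_mem_steps hp
    exact ang_rev p.1 p.2
      (Γ.noHalfTurn p.1 (hmem _ hm.1) p.2 (hmem _ hm.2) hs.1 hs.2)
  -- product of weights is preserved
  set f : ℂ × ℂ → ℂ := fun q => (x (ue q) : ℂ) with hf
  have hfe : f (rev a) = f a := by simp [hf]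
  have hfne : f a ≠ 0 := by
    simp only [hf, ne_eq, Complex.ofReal_eq_zero]
    exact (hx _).ne'
  have hprod : ((revWalk (a :: t)).dropLast.map f).prod = ((a :: t).dropLast.map f).prod := by
    have h1 : (revWalk (a :: t)).dropLast = ((a :: t).tail.map rev).reverse := by
      rw [revWalk, List.dropLast_reverse, List.map_tail]
    rw [h1, List.map_reverse, List.prod_reverse, List.map_map]
    have h2 : ((a :: t).tail.map (f ∘ rev)) = ((a :: t).tail.map f) := by
      apply List.map_congr_left
      intro q _
      simp [hf, Function.comp]
    rw [h2]
    -- now compare tail-product with dropLast-product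
    have h3 : f a * (((a :: t).tail.map f).prod) = ((a :: t).map f).prod := by simp
    have h4 : ((a :: t).map f).prod = (((a :: t).dropLast.map f).prod) * f a := by
      conv_lhs => rw [← List.dropLast_append_getLast (l := a :: t) (by simp)]
      rw [List.map_append, List.prod_append, hL]
      simp [hfe]
    have h5 : ((a :: t).tail.map f).prod * f a = (((a :: t).dropLast.map f).prod) * f a := by
      rw [← h4, ← h3]; ring
    exact mul_right_cancel₀ hfne h5
  -- exponential factor flips sign
  have hexp2 : Complex.exp (Complex.I * ((totalAngle (revWalk (a :: t)) : ℝ) : ℂ) / 2)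
      = - Complex.exp (Complex.I * ((totalAngle (a :: t) : ℝ) : ℂ) / 2) := by
    rw [hangle]
    have key : Complex.exp (Complex.I * (((- totalAngle (a :: t) : ℝ)) : ℂ) / 2) *
        Complex.exp (Complex.I * ((totalAngle (a :: t) : ℝ) : ℂ))
        = Complex.exp (Complex.I * ((totalAngle (a :: t) : ℝ) : ℂ) / 2) := by
      rw [← Complex.exp_add]
      congr 1
      push_cast
      ring
    rw [hexp] at key
    linear_combination -key
  rw [wt, wt, hexp2, hprod]
  ring

/-- the sum of signed weights over all non-backtracking walks from `e`
to `-e` vanishes (assuming absolute convergence of the series, which holds e.g.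
when `‖x‖_∞ < 1/(Δ-1)`). -/
theorem sum_weights_to_reversed_edge_eq_zero
    (Γ : PlaneGraph) (x : Sym2 ℂ → ℝ) (hx : ∀ t : Sym2 ℂ, 0 < x t)
    (e : ℂ × ℂ)
    (hsum : Summable fun l : {l : List (ℂ × ℂ) // WalkFrom Γ.D e (rev e) l} => ‖wt x l.1‖) :
    ∑' l : {l : List (ℂ × ℂ) // WalkFrom Γ.D e (rev e) l}, wt x l.1 = 0 := by
  set T := {l : List (ℂ × ℂ) // WalkFrom Γ.D e (rev e) l}
  let σ : T ≃ T :=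
    ⟨fun l => ⟨revWalk l.1, revWalk_walkFrom Γ e l.2⟩,
     fun l => ⟨revWalk l.1, revWalk_walkFrom Γ e l.2⟩,
     fun l => Subtype.ext (revWalk_revWalk l.1),
     fun l => Subtype.ext (revWalk_revWalk l.1)⟩
  have h1 : ∑' l : T, wt x (σ l).1 = ∑' l : T, wt x l.1 := σ.tsum_eq fun l : T => wt x l.1
  have h2 : ∀ l : T, wt x (σ l).1 = - wt x l.1 := fun l => wt_revWalk Γ x hx e l.2
  have h3 : ∑' l : T, wt x (σ l).1 = - ∑' l : T, wt x l.1 := by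
    simp_rw [h2]
    exact tsum_neg
  have h4 : ∑' l : T, wt x l.1 = - ∑' l : T, wt x l.1 := h1.symm.trans h3
  have : (2 : ℂ) * ∑' l : T, wt x l.1 = 0 := by linear_combination h4
  simpa using this
end
end
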